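/- Let H and F be real inner product spaces with dim H = 4 and dim F = 2, and let V = H ⊕ F with the direct-sum inner product. Let J_H and J_F be orthogonal complex structures on H and F respectively, with Hermitian 2-forms ω_H and ω_F, pulled back to 2-forms on V via the orthogonal projections onto H and F, and set ω := ω_H + ω_F. Let δ : V → ℝ be a linear functional vanishing on F. Then the contraction ω ⌟ (δ ∧ ω_H) equals δ; explicitly, for every orthonormal basis (e₁,…,e₆) of V and every v ∈ V, Σ_{1 ≤ i < j ≤ 6} ω(e_i,e_j) · (δ ∧ ω_H)(e_i,e_j,v) = δ(v), where δ ∧ ω_H is the alternating 3-form (δ ∧ ω_H)(u,v,w) = δ(u)ω_H(v,w) − δ(v)ω_H(u,w) + δ(w)ω_H(u,v). -/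

import Mathlib

open scoped InnerProductSpace
open Finset

/-- Let `H` and `F` be real inner product spaces with `dim H = 4` and
`dim F = 2`, and let `V = H ⊕ F` (realized as `WithLp 2 (H × F)`) with the direct-sum inner
product.  Let `J_H` and `J_F` be orthogonal complex structures on `H` and `F` with Hermitian
2-forms `ω_H` and `ω_F`, pulled back to 2-forms on `V` via the orthogonal projections, and
let `ω = ω_H + ω_F`.  Let `δ : V → ℝ` be a linear functional vanishing on `F`.  Then the
contraction `ω ⌟ (δ ∧ ω_H)` equals `δ`: for every orthonormal basis `(e₁,…,e₆)` of `V` and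
every `v ∈ V`, `∑_{i<j} ω (e i) (e j) * (δ ∧ ω_H)(e i, e j, v) = δ v`, where
`(δ ∧ ω_H)(u,v,w) = δ u * ω_H v w - δ v * ω_H u w + δ w * ω_H u v`. -/
theorem contraction_sum_hermitian_wedge_base_one_form
    {H F : Type*} [NormedAddCommGroup H] [InnerProductSpace ℝ H]
    [NormedAddCommGroup F] [InnerProductSpace ℝ F]
    (hH : Module.finrank ℝ H = 4) (hF : Module.finrank ℝ F = 2)
    (JH : H →ₗ[ℝ] H)
    (hJH2 : ∀ h : H, JH (JH h) = -h)
    (hJHorth : ∀ h h' : H, ⟪JH h, JH h'⟫_ℝ = ⟪h, h'⟫_ℝ)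
    (JF : F →ₗ[ℝ] F)
    (hJF2 : ∀ f : F, JF (JF f) = -f)
    (hJForth : ∀ f f' : F, ⟪JF f, JF f'⟫_ℝ = ⟪f, f'⟫_ℝ)
    (ωH ωF ω : WithLp 2 (H × F) → WithLp 2 (H × F) → ℝ)
    (hωH : ∀ u v : WithLp 2 (H × F),
      ωH u v = ⟪JH (WithLp.equiv 2 (H × F) u).1, (WithLp.equiv 2 (H × F) v).1⟫_ℝ)
    (hωF : ∀ u v : WithLp 2 (H × F),
      ωF u v = ⟪JF (WithLp.equiv 2 (H × F) u).2, (WithLp.equiv 2 (H × F) v).2⟫_ℝ)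
    (hω : ∀ u v : WithLp 2 (H × F), ω u v = ωH u v + ωF u v)
    (δ : WithLp 2 (H × F) →ₗ[ℝ] ℝ)
    (hδ : ∀ f : F, δ ((WithLp.equiv 2 (H × F)).symm (0, f)) = 0)
    (e : OrthonormalBasis (Fin 6) ℝ (WithLp 2 (H × F)))
    (v : WithLp 2 (H × F)) :
    ∑ i : Fin 6, ∑ j ∈ Finset.Ioi i,
      ω (e i) (e j) *
        (δ (e i) * ωH (e j) v - δ (e j) * ωH (e i) v + δ v * ωH (e i) (e j)) =
      δ v := by
  -- skew-symmetry of JH and JF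
  have hJHskew : ∀ a b : H, ⟪JH a, b⟫_ℝ = -⟪a, JH b⟫_ℝ := by
    intro a b
    have h := hJHorth a (JH b)
    rw [hJH2 b, inner_neg_right] at h
    linarith
  have hJFskew : ∀ a b : F, ⟪JF a, b⟫_ℝ = -⟪a, JF b⟫_ℝ := by
    intro a b
    have h := hJForth a (JF b)
    rw [hJF2 b, inner_neg_right] at h
    linarith
  -- the two "complex structure" maps on the direct sum
  set Jl : WithLp 2 (H × F) → WithLp 2 (H × F) :=
    fun u => (WithLp.equiv 2 (H × F)).symm (JH u.fst, JF u.snd) with hJl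
  set Jt : WithLp 2 (H × F) → WithLp 2 (H × F) :=
    fun u => (WithLp.equiv 2 (H × F)).symm (JH u.fst, 0) with hJt
  have hωJ : ∀ u w : WithLp 2 (H × F), ω u w = ⟪Jl u, w⟫_ℝ := by
    intro u w
    rw [hω, hωH, hωF]
    simp [hJl, WithLp.prod_inner_apply]
  have hωHJ : ∀ u w : WithLp 2 (H × F), ωH u w = ⟪Jt u, w⟫_ℝ := by
    intro u w
    rw [hωH]
    simp [hJt, WithLp.prod_inner_apply]
  have skewl : ∀ u w : WithLp 2 (H × F), ⟪Jl u, w⟫_ℝ = -⟪u, Jl w⟫_ℝ := by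
    intro u w
    simp [hJl, WithLp.prod_inner_apply, hJHskew, hJFskew]
    ring
  have skewt : ∀ u w : WithLp 2 (H × F), ⟪Jt u, w⟫_ℝ = -⟪u, Jt w⟫_ℝ := by
    intro u w
    simp [hJt, WithLp.prod_inner_apply, hJHskew]
  -- the Riesz vector of δ
  set d : WithLp 2 (H × F) := ∑ i, δ (e i) • e i with hdd
  have hd : ∀ x : WithLp 2 (H × F), ⟪d, x⟫_ℝ = δ x := by
    intro x
    have h1 : ⟪d, x⟫_ℝ = ∑ i, δ (e i) * ⟪e i, x⟫_ℝ := by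
      rw [hdd, sum_inner]
      simp [real_inner_smul_left, mul_add]
    have h2 : δ x = ∑ i, ⟪e i, x⟫_ℝ * δ (e i) := by
      conv_lhs => rw [← e.sum_repr x]
      rw [map_sum]
      simp [e.repr_apply_apply, real_inner_smul_left]
    rw [h1, h2]
    exact Finset.sum_congr rfl fun i _ => mul_comm _ _
  have hd2 : d.snd = 0 := by
    have h0 : δ ((WithLp.equiv 2 (H × F)).symm (0, d.snd)) = 0 := hδ d.snd
    rw [← hd] at h0
    rw [WithLp.prod_inner_apply] at h0
    simp at h0
    exact h0
  have hdv : ⟪d.fst, v.fst⟫_ℝ = δ v := by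
    rw [← hd v, WithLp.prod_inner_apply, WithLp.ofLp_fst, WithLp.ofLp_snd, WithLp.ofLp_fst, WithLp.ofLp_snd, hd2]
    simp
  -- per-row sum
  have hrow : ∀ i : Fin 6,
      (∑ j : Fin 6, ω (e i) (e j) *
        (δ (e i) * ωH (e j) v - δ (e j) * ωH (e i) v + δ v * ωH (e i) (e j)))
      = -(⟪d, e i⟫_ℝ * ⟪Jl (e i), Jt v⟫_ℝ) - ⟪Jt (e i), v⟫_ℝ * ⟪Jl (e i), d⟫_ℝ
        + δ v * ⟪Jl (e i), Jt (e i)⟫_ℝ := by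
    intro i
    have hterm : ∀ j : Fin 6, ω (e i) (e j) *
        (δ (e i) * ωH (e j) v - δ (e j) * ωH (e i) v + δ v * ωH (e i) (e j))
        = -(⟪d, e i⟫_ℝ * (⟪Jl (e i), e j⟫_ℝ * ⟪e j, Jt v⟫_ℝ))
          - ⟪Jt (e i), v⟫_ℝ * (⟪Jl (e i), e j⟫_ℝ * ⟪e j, d⟫_ℝ)
          + δ v * (⟪Jl (e i), e j⟫_ℝ * ⟪e j, Jt (e i)⟫_ℝ) := by
      intro j
      rw [hωJ, hωHJ, hωHJ, hωHJ, ← hd (e i), ← hd (e j)]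
      rw [skewt (e j) v, real_inner_comm (e j) d, real_inner_comm (e j) (Jt (e i))]
      ring
    calc (∑ j : Fin 6, ω (e i) (e j) *
        (δ (e i) * ωH (e j) v - δ (e j) * ωH (e i) v + δ v * ωH (e i) (e j)))
        = ∑ j : Fin 6, (-(⟪d, e i⟫_ℝ * (⟪Jl (e i), e j⟫_ℝ * ⟪e j, Jt v⟫_ℝ))
          - ⟪Jt (e i), v⟫_ℝ * (⟪Jl (e i), e j⟫_ℝ * ⟪e j, d⟫_ℝ)
          + δ v * (⟪Jl (e i), e j⟫_ℝ * ⟪e j, Jt (e i)⟫_ℝ)) :=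
          Finset.sum_congr rfl fun j _ => hterm j
      _ = -(⟪d, e i⟫_ℝ * ∑ j : Fin 6, ⟪Jl (e i), e j⟫_ℝ * ⟪e j, Jt v⟫_ℝ)
          - ⟪Jt (e i), v⟫_ℝ * ∑ j : Fin 6, ⟪Jl (e i), e j⟫_ℝ * ⟪e j, d⟫_ℝ
          + δ v * ∑ j : Fin 6, ⟪Jl (e i), e j⟫_ℝ * ⟪e j, Jt (e i)⟫_ℝ := by
          simp only [Finset.sum_add_distrib, Finset.sum_sub_distrib,
            Finset.sum_neg_distrib, ← Finset.mul_sum]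
      _ = _ := by
          rw [e.sum_inner_mul_inner, e.sum_inner_mul_inner, e.sum_inner_mul_inner]
  -- total (full double) sum
  have hT1 : ∑ i : Fin 6, -(⟪d, e i⟫_ℝ * ⟪Jl (e i), Jt v⟫_ℝ) = -δ v := by
    have h1 : ∀ i : Fin 6, -(⟪d, e i⟫_ℝ * ⟪Jl (e i), Jt v⟫_ℝ)
        = ⟪d, e i⟫_ℝ * ⟪e i, Jl (Jt v)⟫_ℝ := by
      intro i; rw [skewl]; ring
    rw [Finset.sum_congr rfl fun i _ => h1 i, e.sum_inner_mul_inner]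
    have : ⟪d, Jl (Jt v)⟫_ℝ = -δ v := by
      rw [WithLp.prod_inner_apply]
      simp only [hJl, hJt]
      simp only [WithLp.equiv_symm_apply, WithLp.toLp_fst, WithLp.toLp_snd, map_zero]
      rw [hJH2 v.fst, inner_neg_right]
      simp [hdv]
    rw [this]
  have hT2 : ∑ i : Fin 6, ⟪Jt (e i), v⟫_ℝ * ⟪Jl (e i), d⟫_ℝ = δ v := by
    have h1 : ∀ i : Fin 6, ⟪Jt (e i), v⟫_ℝ * ⟪Jl (e i), d⟫_ℝ
        = ⟪Jl d, e i⟫_ℝ * ⟪e i, Jt v⟫_ℝ := by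
      intro i
      rw [skewt, skewl, real_inner_comm (e i) (Jl d)]
      ring
    rw [Finset.sum_congr rfl fun i _ => h1 i, e.sum_inner_mul_inner]
    rw [WithLp.prod_inner_apply]
    simp only [hJl, hJt]
    simp only [WithLp.equiv_symm_apply, WithLp.toLp_fst, WithLp.toLp_snd, hd2, map_zero]
    rw [hJHorth]
    simp [hdv]
  have hT3 : ∑ i : Fin 6, ⟪Jl (e i), Jt (e i)⟫_ℝ = 4 := by
    have h1 : ∀ i : Fin 6, ⟪Jl (e i), Jt (e i)⟫_ℝ = ⟪(e i).fst, (e i).fst⟫_ℝ := by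
      intro i
      rw [WithLp.prod_inner_apply]
      simp only [hJl, hJt, WithLp.equiv_symm_apply, WithLp.toLp_fst, WithLp.toLp_snd]
      rw [hJHorth]
      simp
    rw [Finset.sum_congr rfl fun i _ => h1 i]
    have : FiniteDimensional ℝ H := FiniteDimensional.of_finrank_pos (by omega)
    set bH : OrthonormalBasis (Fin 4) ℝ H :=
      (stdOrthonormalBasis ℝ H).reindex (finCongr hH) with hbH
    set u : Fin 4 → WithLp 2 (H × F) :=
      fun k => (WithLp.equiv 2 (H × F)).symm (bH k, 0) with hu
    have h2 : ∀ i : Fin 6, ⟪(e i).fst, (e i).fst⟫_ℝ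
        = ∑ k : Fin 4, ⟪e i, u k⟫_ℝ * ⟪u k, e i⟫_ℝ := by
      intro i
      rw [← bH.sum_inner_mul_inner ((e i).fst) ((e i).fst)]
      refine Finset.sum_congr rfl fun k _ => ?_
      rw [WithLp.prod_inner_apply, WithLp.prod_inner_apply]
      simp [hu]
    rw [Finset.sum_congr rfl fun i _ => h2 i, Finset.sum_comm]
    have h3 : ∀ k : Fin 4, ∑ i : Fin 6, ⟪e i, u k⟫_ℝ * ⟪u k, e i⟫_ℝ = 1 := by
      intro k
      have : ∀ i : Fin 6, ⟪e i, u k⟫_ℝ * ⟪u k, e i⟫_ℝ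
          = ⟪u k, e i⟫_ℝ * ⟪e i, u k⟫_ℝ := fun i => mul_comm _ _
      rw [Finset.sum_congr rfl fun i _ => this i, e.sum_inner_mul_inner]
      rw [WithLp.prod_inner_apply]
      simp only [hu, WithLp.equiv_symm_apply, WithLp.toLp_fst, WithLp.toLp_snd]
      rw [real_inner_self_eq_norm_mul_norm, bH.orthonormal.1 k]
      simp
    rw [Finset.sum_congr rfl fun k _ => h3 k]
    simp
  have hfull : ∑ i : Fin 6, ∑ j : Fin 6, ω (e i) (e j) *
      (δ (e i) * ωH (e j) v - δ (e j) * ωH (e i) v + δ v * ωH (e i) (e j))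
      = 2 * δ v := by
    rw [Finset.sum_congr rfl fun i _ => hrow i]
    rw [Finset.sum_add_distrib, Finset.sum_sub_distrib, hT1, hT2, ← Finset.mul_sum, hT3]
    ring
  -- symmetrize
  set g : Fin 6 → Fin 6 → ℝ := fun i j => ω (e i) (e j) *
      (δ (e i) * ωH (e j) v - δ (e j) * ωH (e i) v + δ v * ωH (e i) (e j)) with hg
  have gsymm : ∀ i j, g j i = g i j := by
    intro i j
    simp only [hg, hωJ, hωHJ]
    rw [skewl (e j) (e i), real_inner_comm (Jl (e i)) (e j),
      skewt (e j) (e i), real_inner_comm (Jt (e i)) (e j)]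
    ring
  have gdiag : ∀ i, g i i = 0 := by
    intro i
    have hz : ω (e i) (e i) = 0 := by
      have h1 := skewl (e i) (e i)
      rw [real_inner_comm (Jl (e i)) (e i)] at h1
      have h2 := hωJ (e i) (e i)
      linarith
    simp only [hg, hz, zero_mul]
  have key := Finset.sum_sum_Ioi_add_eq_sum_sum_off_diag g
  have key2 : ∑ i : Fin 6, ∑ j ∈ Ioi i, (g j i + g i j)
      = ∑ i : Fin 6, ∑ j ∈ Ioi i, (2 * g i j) := by
    refine Finset.sum_congr rfl fun i _ => Finset.sum_congr rfl fun j _ => ?_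
    rw [gsymm]; ring
  have key4 : ∑ i : Fin 6, ∑ j : Fin 6, g j i = 2 * δ v := by
    rw [Finset.sum_comm]; exact hfull
  rw [key2] at key
  have key5 : ∑ i : Fin 6, ∑ j ∈ Ioi i, (2 * g i j) = 2 * δ v := by
    calc ∑ i : Fin 6, ∑ j ∈ Ioi i, (2 * g i j) = _ := key
      _ = ∑ i : Fin 6, ∑ j : Fin 6, g j i := by
          refine Finset.sum_congr rfl fun i _ => ?_
          refine Finset.sum_subset (Finset.subset_univ _) ?_
          intro x _ hx
          simp only [Finset.mem_compl, Finset.mem_singleton, not_not] at hx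
          rw [hx]
          exact gdiag i
      _ = 2 * δ v := key4
  have key6 : ∑ i : Fin 6, ∑ j ∈ Ioi i, (2 * g i j)
      = 2 * ∑ i : Fin 6, ∑ j ∈ Ioi i, g i j := by
    simp [Finset.mul_sum]
  rw [key6] at key5
  have final : ∑ i : Fin 6, ∑ j ∈ Ioi i, g i j = δ v := by linarith
  exact final
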